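/- arXiv:0803.2091 — 3 statements merged into one kernel-verified Lean document; each statement's English description precedes it below -/
import Mathlib

section
/- Let c_i be a pure strategy of player i in a finite game. If there exists a dual vector α such that c_i ∉ C_i/α_i while C_j/α_j = C_j for every player j ≠ i (i.e., every pure strategy of every other player is α_j-stationary and forms its own minimal absorbing set), then there exists a mixed strategy σ_i ∈ Δ(C_i) with σ_i ≠ δ_{c_i} such that U_i(c_{-i}, σ_i) ≥ U_i(c_{-i}, c_i) for all c_{-i} ∈ C_{-i}. -/
open scoped BigOperators

section Prelim

variable {S : Type} [Fintype S] [DecidableEq S]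

/-- `σ` is a mixed strategy (probability distribution) on the finite set `S`. -/
def IsMixed (σ : S → ℝ) : Prop := (∀ s, 0 ≤ σ s) ∧ ∑ s, σ s = 1

/-- The Dirac measure `δ_s`. -/
def dirac (s : S) : S → ℝ := fun d => if d = s then 1 else 0

/-- `α_i * σ_i`, the image of the mixed strategy `σ` under the deviation plan `αᵢ`,
where `αᵢ c d` is the probability `αᵢ(d | c)`. -/
def devImage (αᵢ : S → S → ℝ) (σ : S → ℝ) : S → ℝ := fun d => ∑ c, σ c * αᵢ c d

/-- `σ` is `αᵢ`-stationary: `αᵢ * σ = σ`. -/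
def IsStationaryStrategy (αᵢ : S → S → ℝ) (σ : S → ℝ) : Prop := devImage αᵢ σ = σ

/-- A nonempty `B ⊆ S` is `αᵢ`-absorbing if `supp (αᵢ * c) ⊆ B` for all `c ∈ B`. -/
def IsAbsorbing (αᵢ : S → S → ℝ) (B : Finset S) : Prop :=
  B.Nonempty ∧ ∀ c ∈ B, ∀ d, 0 < αᵢ c d → d ∈ B

/-- A minimal absorbing set: an absorbing set containing no proper nonempty absorbing subset. -/
def IsMinimalAbsorbing (αᵢ : S → S → ℝ) (B : Finset S) : Prop :=
  IsAbsorbing αᵢ B ∧ ∀ B' ⊆ B, IsAbsorbing αᵢ B' → B' = B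

/-- `C_i/α_i`: the set of `αᵢ`-stationary mixed strategies whose support is contained
in some minimal `αᵢ`-absorbing set. -/
def ReducedSet (αᵢ : S → S → ℝ) : Set (S → ℝ) :=
  {σ | IsMixed σ ∧ IsStationaryStrategy αᵢ σ ∧
    ∃ B : Finset S, IsMinimalAbsorbing αᵢ B ∧ ∀ s, σ s ≠ 0 → s ∈ B}

end Prelim

section Games

variable {N : Type} [Fintype N] [DecidableEq N]
  {C : N → Type} [∀ i, Fintype (C i)] [∀ i, DecidableEq (C i)]

/-- Marginal probability of the pure strategy `cᵢ` of player `i` under `μ`. -/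
def marginal (μ : (∀ j, C j) → ℝ) (i : N) (cᵢ : C i) : ℝ :=
  ∑ c : ∀ j, C j, if c i = cᵢ then μ c else 0

/-- The incentive sum `∑_{c_{-i}} μ(c_{-i},cᵢ)[U_i(c_{-i},dᵢ) − U_i(c_{-i},cᵢ)]`. -/
def incentiveSum (U : ∀ i : N, (∀ j, C j) → ℝ) (μ : (∀ j, C j) → ℝ) (i : N) (cᵢ dᵢ : C i) : ℝ :=
  ∑ c : ∀ j, C j, if c i = cᵢ then μ c * (U i (Function.update c i dᵢ) - U i c) else 0

/-- Correlated equilibrium. -/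
def IsCorrelatedEq (U : ∀ i : N, (∀ j, C j) → ℝ) (μ : (∀ j, C j) → ℝ) : Prop :=
  (∀ c, 0 ≤ μ c) ∧ (∑ c : ∀ j, C j, μ c) = 1 ∧
    ∀ (i : N) (cᵢ dᵢ : C i), incentiveSum U μ i cᵢ dᵢ ≤ 0

/-- Multilinear extension: payoff of player `i` under the mixed strategy profile `σ`. -/
def mixedPayoff (U : ∀ i : N, (∀ j, C j) → ℝ) (σ : ∀ j, C j → ℝ) (i : N) : ℝ :=
  ∑ c : ∀ j, C j, (∏ j, σ j (c j)) * U i c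

/-- Nash equilibrium. -/
def IsNash (U : ∀ i : N, (∀ j, C j) → ℝ) (σ : ∀ j, C j → ℝ) : Prop :=
  (∀ i, IsMixed (σ i)) ∧
  ∀ (i : N) (dᵢ : C i),
    mixedPayoff U (Function.update σ i (dirac dᵢ)) i ≤ mixedPayoff U σ i

/-- `D(c, α) = ∑_i [U_i(c_{-i}, α_i * c_i) − U_i(c)]`. -/
def devGain (U : ∀ i : N, (∀ j, C j) → ℝ) (α : ∀ i, C i → C i → ℝ) (c : ∀ j, C j) : ℝ :=
  ∑ i, ((∑ dᵢ, α i (c i) dᵢ * U i (Function.update c i dᵢ)) - U i c)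

/-- A dual vector: a profile of deviation plans with `D(c,α) ≥ 0` for all `c`. -/
def IsDualVector (U : ∀ i : N, (∀ j, C j) → ℝ) (α : ∀ i, C i → C i → ℝ) : Prop :=
  (∀ (i : N) (cᵢ : C i), IsMixed (α i cᵢ)) ∧ ∀ c, 0 ≤ devGain U α c

/-- A strong dual vector: `D(c,α) > 0` whenever `c` has probability zero in all
correlated equilibria. -/
def IsStrong (U : ∀ i : N, (∀ j, C j) → ℝ) (α : ∀ i, C i → C i → ℝ) : Prop :=
  ∀ c : ∀ j, C j, (∀ μ, IsCorrelatedEq U μ → μ c = 0) → 0 < devGain U α c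

/-- A full dual vector: `α_i(dᵢ|cᵢ) > 0` whenever `β_i(dᵢ|cᵢ) > 0` for some dual vector `β`. -/
def IsFull (U : ∀ i : N, (∀ j, C j) → ℝ) (α : ∀ i, C i → C i → ℝ) : Prop :=
  ∀ (i : N) (cᵢ dᵢ : C i),
    (∃ β : ∀ i, C i → C i → ℝ, IsDualVector U β ∧ 0 < β i cᵢ dᵢ) → 0 < α i cᵢ dᵢ

end Games

/-- If some dual vector `α` eliminates `cᵢ` while keeping every pure strategy of every other
player (each being `α j`-stationary and its own minimal absorbing set), then `cᵢ` is weakly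
dominated by, or equivalent to, some other mixed strategy `σᵢ`. -/
theorem eliminated_alone_implies_weakly_dominated
    {N : Type} [Fintype N] [DecidableEq N] [Nonempty N]
    {C : N → Type} [∀ i, Fintype (C i)] [∀ i, DecidableEq (C i)] [∀ i, Nonempty (C i)]
    (U : ∀ i : N, (∀ j, C j) → ℝ) (i : N) (cᵢ : C i)
    (α : ∀ j, C j → C j → ℝ) (hα : IsDualVector U α)
    (hnot : dirac cᵢ ∉ ReducedSet (α i))
    (hothers : ∀ j, j ≠ i → ∀ cj : C j,
      IsStationaryStrategy (α j) (dirac cj) ∧ IsMinimalAbsorbing (α j) {cj}) :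
    ∃ σᵢ : C i → ℝ, IsMixed σᵢ ∧ σᵢ ≠ dirac cᵢ ∧
      ∀ c : ∀ j, C j,
        U i (Function.update c i cᵢ) ≤ ∑ dᵢ, σᵢ dᵢ * U i (Function.update c i dᵢ) := by
    classical
  -- Every other player's deviation plan is the identity.
  have hrow : ∀ j, j ≠ i → ∀ cj : C j, α j cj = dirac cj := by
    intro j hj cj
    funext d
    have h := congrFun ((hothers j hj cj).1) d
    simpa [devImage, dirac, Finset.sum_ite_eq', eq_comm] using h
  refine ⟨α i cᵢ, hα.1 i cᵢ, ?_, ?_⟩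
  · intro heq
    apply hnot
    refine ⟨⟨?_, ?_⟩, ?_, {cᵢ}, ⟨⟨⟨cᵢ, by simp⟩, ?_⟩, ?_⟩, ?_⟩
    · intro s; simp [dirac]; split <;> norm_num
    · simp [dirac, Finset.sum_ite_eq']
    · funext d
      simp only [devImage, dirac]
      simp only [ite_mul, one_mul, zero_mul, Finset.sum_ite_eq', Finset.mem_univ,
        if_true, heq, dirac]
    · intro c hc d hd
      simp only [Finset.mem_singleton] at hc
      subst hc
      rw [heq] at hd
      simp only [dirac] at hd
      split at hd
      · simpa [*] using Finset.mem_singleton.mpr ‹d = cᵢ›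
      · exact absurd hd (by norm_num)
    · intro B' hB' hB'abs
      rcases hB'abs.1 with ⟨x, hx⟩
      have hxc : x = cᵢ := Finset.mem_singleton.mp (hB' hx)
      apply Finset.Subset.antisymm hB'
      intro y hy
      simp only [Finset.mem_singleton] at hy
      subst hy; subst hxc; exact hx
    · intro s hs
      simp only [dirac] at hs
      by_cases h : s = cᵢ
      · simp [h]
      · simp [h] at hs
  · intro c
    set c' := Function.update c i cᵢ with hc'
    have h0 := hα.2 c'
    have hsum : devGain U α c' =
        (∑ d, α i (c' i) d * U i (Function.update c' i d)) - U i c' := by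
      unfold devGain
      rw [Finset.sum_eq_single_of_mem i (Finset.mem_univ i)]
      intro j _ hj
      rw [hrow j hj (c' j)]
      have : ∑ d, dirac (c' j) d * U j (Function.update c' j d)
          = U j (Function.update c' j (c' j)) := by
        simp [dirac, Finset.sum_ite_eq', ite_mul]
      rw [this, Function.update_eq_self]
      ring
    have hci : c' i = cᵢ := Function.update_self i cᵢ c
    have hupd : ∀ d : C i, Function.update c' i d = Function.update c i d := by
      intro d; rw [hc', Function.update_idem]
    rw [hsum, hci] at h0
    have : (∑ d, α i cᵢ d * U i (Function.update c' i d))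
        = ∑ d, α i cᵢ d * U i (Function.update c i d) := by
      apply Finset.sum_congr rfl; intro d _; rw [hupd d]
    rw [this] at h0
    linarith
end

section
/- Let Γ be a finite game and, for each player i, let C'_i ⊆ C_i be nonempty. Suppose that for every player i and every c_i ∈ C_i \ C'_i there exists σ_i^{c_i} ∈ Δ(C'_i) with U_i(c_{-i}, c_i) = U_i(c_{-i}, σ_i^{c_i}) for all c_{-i} ∈ C_{-i}. Define the deviation plan α_i by α_i*c_i = σ_i^{c_i} if c_i ∉ C'_i and α_i*c_i = δ_{c_i} if c_i ∈ C'_i. Then α = (α_i)_{i∈N} is a dual vector of Γ (indeed D(c,α) = 0 for all c), and C_i/α_i = {δ_{c_i} : c_i ∈ C'_i} for every player i; i.e., the game Γ' with strategy sets C'_i is a dual reduction of Γ. -/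
open scoped BigOperators

/-- Omitting redundant strategies yields a dual reduction: if every omitted strategy `cᵢ` is
payoff-equivalent (for player `i`) to a mixed strategy `σrep i cᵢ` on the kept set `C' i`,
then the deviation plan sending omitted strategies to their replacements and kept
strategies to themselves is a dual vector with `D(c,α) = 0` everywhere, and the reduced
strategy sets are exactly the Dirac measures on the kept strategies. -/
theorem redundant_elimination_is_dual_reduction
    {N : Type} [Fintype N] [DecidableEq N] [Nonempty N]
    {C : N → Type} [∀ i, Fintype (C i)] [∀ i, DecidableEq (C i)] [∀ i, Nonempty (C i)]
    (U : ∀ i : N, (∀ j, C j) → ℝ)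
    (C' : ∀ i, Finset (C i)) (hC' : ∀ i, (C' i).Nonempty)
    (σrep : ∀ i, C i → C i → ℝ)
    (hmix : ∀ (i : N) (cᵢ : C i), cᵢ ∉ C' i →
      IsMixed (σrep i cᵢ) ∧ ∀ d, σrep i cᵢ d ≠ 0 → d ∈ C' i)
    (hpay : ∀ (i : N) (cᵢ : C i), cᵢ ∉ C' i → ∀ c : ∀ j, C j,
      ∑ d, σrep i cᵢ d * U i (Function.update c i d) = U i (Function.update c i cᵢ))
    (α : ∀ i, C i → C i → ℝ)
    (hαdef : ∀ (i : N) (cᵢ : C i), α i cᵢ = if cᵢ ∈ C' i then dirac cᵢ else σrep i cᵢ) :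
    IsDualVector U α ∧ (∀ c, devGain U α c = 0) ∧
      ∀ i : N, ReducedSet (α i) = {σ | ∃ cᵢ ∈ C' i, σ = dirac cᵢ} := by
  -- dirac is mixed
  have hdiracMixed : ∀ (i : N) (cᵢ : C i), IsMixed (dirac cᵢ) := by
    intro i cᵢ
    constructor
    · intro s; unfold dirac; split <;> norm_num
    · simp [dirac]
  have hαMixed : ∀ (i : N) (cᵢ : C i), IsMixed (α i cᵢ) := by
    intro i cᵢ
    rw [hαdef]
    by_cases h : cᵢ ∈ C' i
    · simpa [h] using hdiracMixed i cᵢ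
    · simpa [h] using (hmix i cᵢ h).1
  -- devGain = 0
  have hgain : ∀ c, devGain U α c = 0 := by
    intro c
    unfold devGain
    apply Finset.sum_eq_zero
    intro i _
    have hterm : (∑ dᵢ, α i (c i) dᵢ * U i (Function.update c i dᵢ)) = U i c := by
      rw [hαdef]
      by_cases h : c i ∈ C' i
      · simp [h, dirac, ite_mul, Function.update_eq_self]
      · simp only [h, if_false]
        rw [hpay i (c i) h c, Function.update_eq_self]
    rw [hterm]; ring
  refine ⟨⟨hαMixed, fun c => le_of_eq (hgain c).symm⟩, hgain, ?_⟩
  intro i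
  ext σ
  constructor
  · rintro ⟨hσmix, hσstat, B, ⟨⟨hBne, hBabs⟩, hBmin⟩, hsupp⟩
    -- B contains an element of C' i
    have hBC : ∃ s ∈ B, s ∈ C' i := by
      obtain ⟨b, hb⟩ := hBne
      by_cases hbc : b ∈ C' i
      · exact ⟨b, hb, hbc⟩
      · obtain ⟨⟨hnn, hsum⟩, hsp⟩ := hmix i b hbc
        have : ∃ d, σrep i b d ≠ 0 := by
          by_contra h
          push_neg at h
          simp [h] at hsum
        obtain ⟨d, hd⟩ := this
        have hpos : 0 < σrep i b d := lt_of_le_of_ne (hnn d) (Ne.symm hd)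
        have hαpos : 0 < α i b d := by rw [hαdef]; simpa [hbc] using hpos
        exact ⟨d, hBabs b hb d hαpos, hsp d hd⟩
    obtain ⟨s, hsB, hsC⟩ := hBC
    -- {s} is absorbing and ⊆ B, so B = {s}
    have habs : IsAbsorbing (α i) {s} := by
      refine ⟨⟨s, Finset.mem_singleton_self s⟩, ?_⟩
      intro c hc d hd
      rw [Finset.mem_singleton] at hc
      subst hc
      rw [hαdef] at hd
      simp only [hsC, if_true, dirac] at hd
      rw [Finset.mem_singleton]
      by_contra hne
      simp [hne] at hd
    have hB : B = {s} := (hBmin {s} (Finset.singleton_subset_iff.mpr hsB) habs).symm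
    -- σ is supported on {s}, mixed, so σ = dirac s
    refine ⟨s, hsC, ?_⟩
    funext d
    by_cases hds : d = s
    · subst hds
      have : ∑ t, σ t = σ d := by
        rw [Finset.sum_eq_single d]
        · intro t _ ht
          by_contra h
          have := hsupp t h
          rw [hB, Finset.mem_singleton] at this
          exact ht this
        · intro h; exact absurd (Finset.mem_univ d) h
      have h1 := hσmix.2
      rw [this] at h1
      simp [dirac, h1]
    · have : σ d = 0 := by
        by_contra h
        have := hsupp d h
        rw [hB, Finset.mem_singleton] at this
        exact hds this
      simp [dirac, hds, this]
  · rintro ⟨cᵢ, hcᵢ, rfl⟩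
    refine ⟨hdiracMixed i cᵢ, ?_, {cᵢ}, ⟨⟨⟨cᵢ, Finset.mem_singleton_self cᵢ⟩, ?_⟩, ?_⟩, ?_⟩
    · funext d
      unfold devImage
      rw [Finset.sum_eq_single cᵢ]
      · rw [hαdef]; simp [dirac, hcᵢ]
      · intro t _ ht; simp [dirac, ht]
      · intro h; exact absurd (Finset.mem_univ cᵢ) h
    · intro c hc d hd
      rw [Finset.mem_singleton] at hc
      subst hc
      rw [hαdef] at hd
      simp only [hcᵢ, if_true, dirac] at hd
      rw [Finset.mem_singleton]
      by_contra hne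
      simp [hne] at hd
    · intro B' hB' hB'abs
      obtain ⟨⟨b, hb⟩, _⟩ := hB'abs
      have := hB' hb
      rw [Finset.mem_singleton] at this
      subst this
      exact Finset.Subset.antisymm hB' (Finset.singleton_subset_iff.mpr hb)
    · intro s hs
      rw [Finset.mem_singleton]
      by_contra h
      simp [dirac, h] at hs
end

section
/- Let α be a dual vector of a finite game Γ. For each player i, let B_i ⊆ C_i be a minimal α_i-absorbing set, let σ_{B_i} be the unique α_i-stationary mixed strategy with support contained in B_i, and let B = ∏_{i∈N} B_i. Then σ_B = (σ_{B_i})_{i∈N} is a completely mixed Nash equilibrium of the restricted game Γ_B = (N, (B_i)_{i∈N}, (U_i)_{i∈N}); in particular, the support of σ_{B_i} is exactly B_i for every i. -/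
open scoped BigOperators

section Helpers
set_option linter.unusedSectionVars false

variable {N : Type} [Fintype N] [DecidableEq N]
  {C : N → Type} [∀ i, Fintype (C i)] [∀ i, DecidableEq (C i)]

lemma sum_shift (i : N) (b d : C i) (F : (∀ j, C j) → ℝ) :
    (∑ c : ∀ j, C j, if c i = b then F (Function.update c i d) else 0)
      = ∑ c : ∀ j, C j, if c i = d then F c else 0 := by
  classical
  rw [Finset.sum_ite, Finset.sum_ite]
  simp only [Finset.sum_const_zero, add_zero]
  refine Finset.sum_bij' (fun c _ => Function.update c i d)
    (fun c _ => Function.update c i b) ?_ ?_ ?_ ?_ ?_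
  · intro a ha; simp
  · intro a ha; simp
  · intro a ha
    simp only [Finset.mem_filter, Finset.mem_univ, true_and] at ha
    funext j
    by_cases h : j = i
    · subst h; simp [ha]
    · simp [h]
  · intro a ha
    simp only [Finset.mem_filter, Finset.mem_univ, true_and] at ha
    funext j
    by_cases h : j = i
    · subst h; simp [ha]
    · simp [h]
  · intro a ha; rfl

lemma prod_update_point (σ : ∀ j, C j → ℝ) (i : N) (ρ : C i → ℝ) (c : ∀ j, C j) :
    (∏ j, Function.update σ i ρ j (c j))
      = ρ (c i) * ∏ j ∈ Finset.univ.erase i, σ j (c j) := by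
  classical
  rw [← Finset.mul_prod_erase Finset.univ _ (Finset.mem_univ i)]
  simp only [Function.update_self]
  congr 1
  refine Finset.prod_congr rfl fun j hj => ?_
  rw [Function.update_of_ne (Finset.mem_erase.1 hj).1]

lemma erase_prod_update (σ : ∀ j, C j → ℝ) (i : N) (c : ∀ j, C j) (d : C i) :
    (∏ j ∈ Finset.univ.erase i, σ j (Function.update c i d j))
      = ∏ j ∈ Finset.univ.erase i, σ j (c j) := by
  refine Finset.prod_congr rfl fun j hj => ?_
  rw [Function.update_of_ne (Finset.mem_erase.1 hj).1]

lemma stat_sum (α : ∀ i, C i → C i → ℝ) (τ : ∀ j, C j → ℝ) (j : N)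
    (hst : devImage (α j) (τ j) = τ j) (H : (∀ j', C j') → ℝ) :
    (∑ c : ∀ j', C j', (∏ j', τ j' (c j')) * (∑ d, α j (c j) d * H (Function.update c j d)))
      = ∑ c : ∀ j', C j', (∏ j', τ j' (c j')) * H c := by
  classical
  have hW : ∀ c : ∀ j', C j', (∏ j', τ j' (c j'))
      = τ j (c j) * ∏ j' ∈ Finset.univ.erase j, τ j' (c j') := fun c =>
    (Finset.mul_prod_erase Finset.univ _ (Finset.mem_univ j)).symm
  set Wj : (∀ j', C j') → ℝ := fun c => ∏ j' ∈ Finset.univ.erase j, τ j' (c j') with hWjdef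
  set S : C j → ℝ := fun d => ∑ c : ∀ j', C j', (if c j = d then Wj c * H c else 0) with hSdef
  have key : ∀ d : C j,
      (∑ c : ∀ j', C j', τ j (c j) * α j (c j) d * (Wj c * H (Function.update c j d)))
        = τ j d * S d := by
    intro d
    have e1 : ∀ c : ∀ j', C j',
        τ j (c j) * α j (c j) d * (Wj c * H (Function.update c j d))
          = ∑ x : C j, (if c j = x then τ j x * α j x d * (Wj c * H (Function.update c j d)) else 0) := by
      intro c
      rw [Finset.sum_ite_eq Finset.univ (c j)
        (fun x => τ j x * α j x d * (Wj c * H (Function.update c j d)))]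
      simp
    have e2 : ∀ x : C j,
        (∑ c : ∀ j', C j',
            (if c j = x then τ j x * α j x d * (Wj c * H (Function.update c j d)) else 0))
          = τ j x * α j x d * S d := by
      intro x
      simp only [hSdef]
      rw [← sum_shift j x d (fun c => Wj c * H c)]
      rw [Finset.mul_sum]
      refine Finset.sum_congr rfl fun c _ => ?_
      by_cases h : c j = x
      · simp only [h, if_true]
        rw [show Wj (Function.update c j d) = Wj c from erase_prod_update τ j c d]
      · simp [h]
    calc (∑ c : ∀ j', C j', τ j (c j) * α j (c j) d * (Wj c * H (Function.update c j d)))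
        = ∑ c : ∀ j', C j', ∑ x : C j,
            (if c j = x then τ j x * α j x d * (Wj c * H (Function.update c j d)) else 0) :=
          Finset.sum_congr rfl fun c _ => e1 c
      _ = ∑ x : C j, ∑ c : ∀ j', C j',
            (if c j = x then τ j x * α j x d * (Wj c * H (Function.update c j d)) else 0) :=
          Finset.sum_comm
      _ = ∑ x : C j, τ j x * α j x d * S d := Finset.sum_congr rfl fun x _ => e2 x
      _ = (∑ x : C j, τ j x * α j x d) * S d := by rw [Finset.sum_mul]
      _ = τ j d * S d := by rw [show (∑ x : C j, τ j x * α j x d) = τ j d from congrFun hst d]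
  have e3 : ∀ c : ∀ j', C j',
      (∑ d : C j, (if c j = d then τ j d * (Wj c * H c) else 0)) = τ j (c j) * (Wj c * H c) := by
    intro c
    rw [Finset.sum_ite_eq Finset.univ (c j) (fun d => τ j d * (Wj c * H c))]
    simp
  calc (∑ c : ∀ j', C j', (∏ j', τ j' (c j')) * (∑ d, α j (c j) d * H (Function.update c j d)))
      = ∑ c : ∀ j', C j', ∑ d : C j,
          τ j (c j) * α j (c j) d * (Wj c * H (Function.update c j d)) := by
        refine Finset.sum_congr rfl fun c _ => ?_
        rw [hW c, Finset.mul_sum]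
        refine Finset.sum_congr rfl fun d _ => ?_
        ring
    _ = ∑ d : C j, ∑ c : ∀ j', C j',
          τ j (c j) * α j (c j) d * (Wj c * H (Function.update c j d)) := Finset.sum_comm
    _ = ∑ d : C j, τ j d * S d := Finset.sum_congr rfl fun d _ => key d
    _ = ∑ d : C j, ∑ c : ∀ j', C j', (if c j = d then τ j d * (Wj c * H c) else 0) := by
        refine Finset.sum_congr rfl fun d _ => ?_
        simp only [hSdef]; rw [Finset.mul_sum]
        refine Finset.sum_congr rfl fun c _ => ?_
        by_cases h : c j = d
        · simp [h]
        · simp [h]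
    _ = ∑ c : ∀ j', C j', ∑ d : C j, (if c j = d then τ j d * (Wj c * H c) else 0) :=
        Finset.sum_comm
    _ = ∑ c : ∀ j', C j', τ j (c j) * (Wj c * H c) := Finset.sum_congr rfl fun c _ => e3 c
    _ = ∑ c : ∀ j', C j', (∏ j', τ j' (c j')) * H c := by
        refine Finset.sum_congr rfl fun c _ => ?_
        rw [hW c]; ring

end Helpers

/-- If `α` is a dual vector, `B i` a minimal `α i`-absorbing set for each `i`, and `σ i` the
`α i`-stationary strategy with support in `B i`, then `σ` is a completely mixed Nash
equilibrium of the restricted game `Γ_B`. -/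
theorem stationary_profile_on_minimal_blocks_is_nash
    {N : Type} [Fintype N] [DecidableEq N] [Nonempty N]
    {C : N → Type} [∀ i, Fintype (C i)] [∀ i, DecidableEq (C i)] [∀ i, Nonempty (C i)]
    (U : ∀ i : N, (∀ j, C j) → ℝ) (α : ∀ i, C i → C i → ℝ) (hα : IsDualVector U α)
    (B : ∀ i, Finset (C i)) (hB : ∀ i, IsMinimalAbsorbing (α i) (B i))
    (σ : ∀ i, C i → ℝ) (hmix : ∀ i, IsMixed (σ i))
    (hstat : ∀ i, IsStationaryStrategy (α i) (σ i))
    (hsupp : ∀ (i : N) (cᵢ : C i), σ i cᵢ ≠ 0 → cᵢ ∈ B i) :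
    (∀ i : N, ∀ bᵢ ∈ B i, 0 < σ i bᵢ) ∧
    (∀ i : N, ∀ dᵢ ∈ B i,
      mixedPayoff U (Function.update σ i (dirac dᵢ)) i ≤ mixedPayoff U σ i) := by
  classical
  -- Part 1: complete mixedness
  have hpos : ∀ i : N, ∀ bᵢ ∈ B i, 0 < σ i bᵢ := by
    intro i
    have hTB : (Finset.univ.filter fun b => σ i b ≠ 0) = B i := by
      refine (hB i).2 _ ?_ ?_
      · intro b hb
        exact hsupp i b (Finset.mem_filter.1 hb).2
      · constructor
        · have hex : ∃ b, σ i b ≠ 0 := by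
            by_contra h
            push_neg at h
            have h1 := (hmix i).2
            rw [Finset.sum_eq_zero (fun b _ => h b)] at h1
            norm_num at h1
          obtain ⟨b, hb⟩ := hex
          exact ⟨b, Finset.mem_filter.2 ⟨Finset.mem_univ b, hb⟩⟩
        · intro c hc d hd
          have hcne : σ i c ≠ 0 := (Finset.mem_filter.1 hc).2
          have hσd : (∑ x, σ i x * α i x d) = σ i d := by
            have := congrFun (hstat i) d
            simpa [devImage] using this
          have hlt : 0 < ∑ x, σ i x * α i x d :=
            Finset.sum_pos' (fun x _ => mul_nonneg ((hmix i).1 x) (((hα.1) i x).1 d))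
              ⟨c, Finset.mem_univ c,
                mul_pos (lt_of_le_of_ne ((hmix i).1 c) (Ne.symm hcne)) hd⟩
          refine Finset.mem_filter.2 ⟨Finset.mem_univ d, ?_⟩
          rw [← hσd]
          exact ne_of_gt hlt
    intro b hb
    rw [← hTB] at hb
    exact lt_of_le_of_ne ((hmix i).1 b) (Ne.symm (Finset.mem_filter.1 hb).2)
  refine ⟨hpos, ?_⟩
  intro i dᵢ hdB
  set f : C i → ℝ := fun d => mixedPayoff U (Function.update σ i (dirac d)) i with hf
  set Wi : (∀ j, C j) → ℝ := fun c => ∏ j ∈ Finset.univ.erase i, σ j (c j) with hWi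
  have hprod : ∀ (b : C i) (c : ∀ j, C j),
      (∏ j, Function.update σ i (dirac b) j (c j)) = if c i = b then Wi c else 0 := by
    intro b c
    rw [prod_update_point]
    by_cases h : c i = b <;> simp [dirac, h, hWi]
  have hfA : ∀ d : C i, f d = ∑ c : ∀ j, C j, (if c i = d then Wi c * U i c else 0) := by
    intro d
    show mixedPayoff U (Function.update σ i (dirac d)) i = _
    unfold mixedPayoff
    refine Finset.sum_congr rfl fun c _ => ?_
    rw [hprod d c]
    by_cases h : c i = d <;> simp [h]
  have hWnn : ∀ c : ∀ j, C j, 0 ≤ Wi c :=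
    fun c => Finset.prod_nonneg fun j _ => (hmix j).1 _
  -- A_i computation
  have hAi : ∀ b : C i,
      (∑ c : ∀ j, C j, (if c i = b then Wi c else 0)
          * (∑ d, α i (c i) d * U i (Function.update c i d)))
        = ∑ d, α i b d * f d := by
    intro b
    calc (∑ c : ∀ j, C j, (if c i = b then Wi c else 0)
            * (∑ d, α i (c i) d * U i (Function.update c i d)))
        = ∑ c : ∀ j, C j, ∑ d : C i,
            (if c i = b then α i b d * (Wi c * U i (Function.update c i d)) else 0) := by
          refine Finset.sum_congr rfl fun c _ => ?_
          by_cases h : c i = b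
          · simp only [h, if_true, Finset.mul_sum]
            refine Finset.sum_congr rfl fun d _ => ?_
            ring
          · simp [h]
      _ = ∑ d : C i, ∑ c : ∀ j, C j,
            (if c i = b then α i b d * (Wi c * U i (Function.update c i d)) else 0) :=
          Finset.sum_comm
      _ = ∑ d : C i, α i b d
            * ∑ c : ∀ j, C j, (if c i = b then Wi c * U i (Function.update c i d) else 0) := by
          refine Finset.sum_congr rfl fun d _ => ?_
          rw [Finset.mul_sum]
          refine Finset.sum_congr rfl fun c _ => ?_
          by_cases h : c i = b <;> simp [h]
      _ = ∑ d : C i, α i b d * ∑ c : ∀ j, C j, (if c i = d then Wi c * U i c else 0) := by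
          refine Finset.sum_congr rfl fun d _ => ?_
          congr 1
          rw [← sum_shift i b d (fun c => Wi c * U i c)]
          refine Finset.sum_congr rfl fun c _ => ?_
          by_cases h : c i = b
          · simp only [h, if_true]
            rw [show Wi (Function.update c i d) = Wi c from erase_prod_update σ i c d]
          · simp [h]
      _ = ∑ d : C i, α i b d * f d := by
          refine Finset.sum_congr rfl fun d _ => ?_
          rw [hfA d]
  -- the key identity: expected deviation gain with player i pinned at b
  have hkey : ∀ b : C i,
      (∑ c : ∀ j, C j, (∏ j, Function.update σ i (dirac b) j (c j)) * devGain U α c)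
        = (∑ d, α i b d * f d) - f b := by
    intro b
    have hsplit : (∑ c : ∀ j, C j,
          (∏ j, Function.update σ i (dirac b) j (c j)) * devGain U α c)
        = ∑ j : N,
            ((∑ c : ∀ j', C j', (∏ j', Function.update σ i (dirac b) j' (c j'))
                * (∑ d, α j (c j) d * U j (Function.update c j d)))
              - ∑ c : ∀ j', C j',
                  (∏ j', Function.update σ i (dirac b) j' (c j')) * U j c) := by
      simp only [devGain]
      calc (∑ c : ∀ j, C j, (∏ j, Function.update σ i (dirac b) j (c j))
              * ∑ j : N, ((∑ d, α j (c j) d * U j (Function.update c j d)) - U j c))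
          = ∑ c : ∀ j, C j, ∑ j : N,
              ((∏ j', Function.update σ i (dirac b) j' (c j'))
                  * (∑ d, α j (c j) d * U j (Function.update c j d))
                - (∏ j', Function.update σ i (dirac b) j' (c j')) * U j c) := by
            refine Finset.sum_congr rfl fun c _ => ?_
            rw [Finset.mul_sum]
            refine Finset.sum_congr rfl fun j _ => ?_
            ring
        _ = ∑ j : N, ∑ c : ∀ j', C j',
              ((∏ j', Function.update σ i (dirac b) j' (c j'))
                  * (∑ d, α j (c j) d * U j (Function.update c j d))
                - (∏ j', Function.update σ i (dirac b) j' (c j')) * U j c) :=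
            Finset.sum_comm
        _ = _ := Finset.sum_congr rfl fun j _ => Finset.sum_sub_distrib _ _
    rw [hsplit]
    rw [Finset.sum_eq_single i
      (fun j _ hj => sub_eq_zero.2 (stat_sum α (Function.update σ i (dirac b)) j
        (by rw [Function.update_of_ne hj]; exact hstat j) (U j)))
      (fun h => absurd (Finset.mem_univ i) h)]
    have h1 : (∑ c : ∀ j', C j', (∏ j', Function.update σ i (dirac b) j' (c j'))
          * (∑ d, α i (c i) d * U i (Function.update c i d)))
        = ∑ d, α i b d * f d := by
      rw [← hAi b]
      exact Finset.sum_congr rfl fun c _ => by rw [hprod b c]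
    have h2 : (∑ c : ∀ j', C j', (∏ j', Function.update σ i (dirac b) j' (c j')) * U i c)
        = f b := by
      rw [hfA b]
      refine Finset.sum_congr rfl fun c _ => ?_
      rw [hprod b c]
      by_cases h : c i = b <;> simp [h]
    rw [h1, h2]
  -- subharmonicity
  have hsub : ∀ b : C i, 0 ≤ (∑ d, α i b d * f d) - f b := by
    intro b
    rw [← hkey b]
    refine Finset.sum_nonneg fun c _ => mul_nonneg ?_ (hα.2 c)
    rw [hprod b c]
    by_cases h : c i = b
    · simp only [h, if_true]; exact hWnn c
    · simp [h]
  -- harmonicity on B i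
  have hharm : ∀ b ∈ B i, (∑ d, α i b d * f d) = f b := by
    have htot : (∑ b : C i, σ i b * ((∑ d, α i b d * f d) - f b)) = 0 := by
      have h1 : (∑ b : C i, σ i b * (∑ d, α i b d * f d)) = ∑ b : C i, σ i b * f b := by
        calc (∑ b : C i, σ i b * ∑ d, α i b d * f d)
            = ∑ b : C i, ∑ d : C i, σ i b * α i b d * f d := by
              refine Finset.sum_congr rfl fun b _ => ?_
              rw [Finset.mul_sum]
              refine Finset.sum_congr rfl fun d _ => ?_
              ring
          _ = ∑ d : C i, ∑ b : C i, σ i b * α i b d * f d := Finset.sum_comm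
          _ = ∑ d : C i, (∑ b : C i, σ i b * α i b d) * f d := by
              refine Finset.sum_congr rfl fun d _ => ?_
              rw [Finset.sum_mul]
          _ = ∑ d : C i, σ i d * f d := by
              refine Finset.sum_congr rfl fun d _ => ?_
              have := congrFun (hstat i) d
              simp only [devImage] at this
              rw [this]
      calc (∑ b : C i, σ i b * ((∑ d, α i b d * f d) - f b))
          = ∑ b : C i, (σ i b * (∑ d, α i b d * f d) - σ i b * f b) := by
            refine Finset.sum_congr rfl fun b _ => ?_
            ring
        _ = (∑ b : C i, σ i b * (∑ d, α i b d * f d)) - ∑ b : C i, σ i b * f b :=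
            Finset.sum_sub_distrib _ _
        _ = 0 := by rw [h1]; ring
    intro b hb
    have hterm := (Finset.sum_eq_zero_iff_of_nonneg
      (fun b _ => mul_nonneg ((hmix i).1 b) (hsub b))).1 htot b (Finset.mem_univ b)
    rcases mul_eq_zero.1 hterm with h | h
    · exact absurd h (ne_of_gt (hpos i b hb))
    · exact sub_eq_zero.1 h
  -- f is constant on B i
  have hconst : ∀ b ∈ B i, f b = f dᵢ := by
    obtain ⟨m, hmB, hmax⟩ := Finset.exists_max_image (B i) f (hB i).1.1
    have hMeq : ((B i).filter fun b => ∀ b' ∈ B i, f b' ≤ f b) = B i := by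
      refine (hB i).2 _ (Finset.filter_subset _ _) ?_
      constructor
      · exact ⟨m, Finset.mem_filter.2 ⟨hmB, hmax⟩⟩
      · intro b hbM d hd
        have hbB : b ∈ B i := (Finset.mem_filter.1 hbM).1
        have hbmax : ∀ b' ∈ B i, f b' ≤ f b := (Finset.mem_filter.1 hbM).2
        have hdBi : d ∈ B i := (hB i).1.2 b hbB d hd
        have hzero : ∀ e : C i, 0 ≤ α i b e * (f b - f e) := by
          intro e
          rcases eq_or_lt_of_le (((hα.1) i b).1 e) with h | h
          · rw [← h]; simp
          · exact mul_nonneg h.le (sub_nonneg.2 (hbmax e ((hB i).1.2 b hbB e h)))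
        have hsum : (∑ e : C i, α i b e * (f b - f e)) = 0 := by
          have h2 : (∑ e : C i, α i b e) = 1 := ((hα.1) i b).2
          calc (∑ e : C i, α i b e * (f b - f e))
              = (∑ e : C i, α i b e) * f b - ∑ e : C i, α i b e * f e := by
                simp only [mul_sub]
                rw [Finset.sum_sub_distrib, Finset.sum_mul]
            _ = 0 := by rw [h2, hharm b hbB]; ring
        have heach := (Finset.sum_eq_zero_iff_of_nonneg
          (fun e _ => hzero e)).1 hsum d (Finset.mem_univ d)
        have hfd : f b - f d = 0 := by
          rcases mul_eq_zero.1 heach with h | h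
          · exact absurd h (ne_of_gt hd)
          · exact h
        refine Finset.mem_filter.2 ⟨hdBi, fun b' hb' => ?_⟩
        have h3 := hbmax b' hb'
        have h4 := sub_eq_zero.1 hfd
        linarith
    have hallmax : ∀ b ∈ B i, ∀ b' ∈ B i, f b' ≤ f b := by
      intro b hb
      have hbM : b ∈ (B i).filter fun b => ∀ b' ∈ B i, f b' ≤ f b := by
        rw [hMeq]; exact hb
      exact (Finset.mem_filter.1 hbM).2
    intro b hb
    exact le_antisymm (hallmax dᵢ hdB b hb) (hallmax b hb dᵢ hdB)
  -- the payoff identity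
  have hpay : mixedPayoff U σ i = ∑ b : C i, σ i b * f b := by
    calc mixedPayoff U σ i = ∑ c : ∀ j, C j, σ i (c i) * (Wi c * U i c) := by
          unfold mixedPayoff
          refine Finset.sum_congr rfl fun c _ => ?_
          rw [show (∏ j, σ j (c j)) = σ i (c i) * Wi c from
            (Finset.mul_prod_erase Finset.univ _ (Finset.mem_univ i)).symm]
          ring
      _ = ∑ c : ∀ j, C j, ∑ b : C i, (if c i = b then σ i b * (Wi c * U i c) else 0) := by
          refine Finset.sum_congr rfl fun c _ => ?_
          rw [Finset.sum_ite_eq Finset.univ (c i) (fun b => σ i b * (Wi c * U i c))]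
          simp
      _ = ∑ b : C i, ∑ c : ∀ j, C j, (if c i = b then σ i b * (Wi c * U i c) else 0) :=
          Finset.sum_comm
      _ = ∑ b : C i, σ i b * f b := by
          refine Finset.sum_congr rfl fun b _ => ?_
          rw [hfA b, Finset.mul_sum]
          refine Finset.sum_congr rfl fun c _ => ?_
          by_cases h : c i = b <;> simp [h]
  have hfinal : (∑ b : C i, σ i b * f b) = f dᵢ := by
    calc (∑ b : C i, σ i b * f b) = ∑ b : C i, σ i b * f dᵢ := by
          refine Finset.sum_congr rfl fun b _ => ?_
          by_cases h : σ i b = 0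
          · rw [h]; ring
          · rw [hconst b (hsupp i b h)]
      _ = (∑ b : C i, σ i b) * f dᵢ := (Finset.sum_mul _ _ _).symm
      _ = f dᵢ := by rw [(hmix i).2]; ring
  show f dᵢ ≤ mixedPayoff U σ i
  rw [hpay, hfinal]
end
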